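/- Let a, b, c, d ∈ ℝ³ be affinely independent and let τ = conv{a,b,c,d}. Then the convex hull of the six edge midpoints, Ω = conv{(a+b)/2, (a+c)/2, (a+d)/2, (b+c)/2, (b+d)/2, (c+d)/2} (the interior octahedron of regular refinement), has Lebesgue volume vol(Ω) = (1/2)·vol(τ). -/

import Mathlib

open MeasureTheory

open Set MeasureTheory
open scoped ENNReal

variable {V : Type*} [AddCommGroup V] [Module ℝ V]

lemma mp_eq (u v : V) : midpoint ℝ u v = (2⁻¹:ℝ) • u + (2⁻¹:ℝ) • v := by
  rw [midpoint_eq_smul_add, smul_add, invOf_eq_inv (2:ℝ)]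

lemma corner_mem (v₁ v₂ v₃ v₄ x : V) (w₁ w₂ w₃ w₄ : ℝ)
    (h₁ : 1/2 ≤ w₁) (h₂ : 0 ≤ w₂) (h₃ : 0 ≤ w₃) (h₄ : 0 ≤ w₄)
    (hs : w₁ + w₂ + w₃ + w₄ = 1)
    (hx : x = w₁ • v₁ + w₂ • v₂ + w₃ • v₃ + w₄ • v₄) :
    x ∈ convexHull ℝ ({v₁, midpoint ℝ v₁ v₂, midpoint ℝ v₁ v₃, midpoint ℝ v₁ v₄} : Set V) := by
  have key := Finset.centerMass_mem_convexHull (Finset.univ : Finset (Fin 4))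
      (w := ![2*w₁-1, 2*w₂, 2*w₃, 2*w₄])
      (z := ![v₁, midpoint ℝ v₁ v₂, midpoint ℝ v₁ v₃, midpoint ℝ v₁ v₄])
      (s := ({v₁, midpoint ℝ v₁ v₂, midpoint ℝ v₁ v₃, midpoint ℝ v₁ v₄} : Set V))
      (by intro i _; fin_cases i <;> simp <;> linarith)
      (by simp [Fin.sum_univ_four]; linarith)
      (by intro i _; fin_cases i <;> simp)
  convert key using 1
  rw [Finset.centerMass, hx]
  have hsum : ∑ i, ![2*w₁-1, 2*w₂, 2*w₃, 2*w₄] i = 1 := by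
    simp [Fin.sum_univ_four]; ring_nf; linarith
  rw [hsum, inv_one, one_smul, Fin.sum_univ_four]
  simp only [Matrix.cons_val_zero, Matrix.cons_val_one, Matrix.head_cons,
    Matrix.cons_val_two, Matrix.tail_cons, Matrix.cons_val_three, mp_eq]
  match_scalars <;> linarith

lemma oct_comb (a b c d x : V) (l₁ l₂ l₃ l₄ l₅ l₆ : ℝ)
    (n₁ : 0 ≤ l₁) (n₂ : 0 ≤ l₂) (n₃ : 0 ≤ l₃) (n₄ : 0 ≤ l₄) (n₅ : 0 ≤ l₅) (n₆ : 0 ≤ l₆)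
    (hs : l₁ + l₂ + l₃ + l₄ + l₅ + l₆ = 1)
    (hx : x = l₁ • midpoint ℝ a b + l₂ • midpoint ℝ a c + l₃ • midpoint ℝ a d
            + l₄ • midpoint ℝ b c + l₅ • midpoint ℝ b d + l₆ • midpoint ℝ c d) :
    x ∈ convexHull ℝ ({midpoint ℝ a b, midpoint ℝ a c, midpoint ℝ a d,
        midpoint ℝ b c, midpoint ℝ b d, midpoint ℝ c d} : Set V) := by
  have e5 : ![l₁, l₂, l₃, l₄, l₅, l₆] (5 : Fin 6) = l₆ := rfl
  have z5 : ![midpoint ℝ a b, midpoint ℝ a c, midpoint ℝ a d,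
      midpoint ℝ b c, midpoint ℝ b d, midpoint ℝ c d] (5 : Fin 6) = midpoint ℝ c d := rfl
  have key := Finset.centerMass_mem_convexHull (Finset.univ : Finset (Fin 6))
      (w := ![l₁, l₂, l₃, l₄, l₅, l₆])
      (z := ![midpoint ℝ a b, midpoint ℝ a c, midpoint ℝ a d,
              midpoint ℝ b c, midpoint ℝ b d, midpoint ℝ c d])
      (s := ({midpoint ℝ a b, midpoint ℝ a c, midpoint ℝ a d,
              midpoint ℝ b c, midpoint ℝ b d, midpoint ℝ c d} : Set V))
      (by intro i _; fin_cases i <;> simpa)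
      (by simp [Fin.sum_univ_six, e5]; linarith)
      (by intro i _; fin_cases i <;> simp [z5])
  convert key using 1
  rw [Finset.centerMass]
  have hsum : ∑ i, ![l₁, l₂, l₃, l₄, l₅, l₆] i = 1 := by
    simpa [Fin.sum_univ_six, e5] using hs
  rw [hsum, inv_one, one_smul, Fin.sum_univ_six, hx]
  simp [e5, z5]

lemma oct_mem (a b c d x : V) (α β γ δ : ℝ)
    (h₁ : 0 ≤ α) (h₂ : 0 ≤ β) (h₃ : 0 ≤ γ) (h₄ : 0 ≤ δ)
    (u₁ : α ≤ 1/2) (u₂ : β ≤ 1/2) (u₃ : γ ≤ 1/2) (u₄ : δ ≤ 1/2)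
    (hs : α + β + γ + δ = 1)
    (hx : x = α • a + β • b + γ • c + δ • d) :
    x ∈ convexHull ℝ ({midpoint ℝ a b, midpoint ℝ a c, midpoint ℝ a d,
        midpoint ℝ b c, midpoint ℝ b d, midpoint ℝ c d} : Set V) := by
  rcases le_total (1/2 : ℝ) (α + β) with hab | hab
  · rcases le_total (β + γ) (1/2 : ℝ) with hbc | hbc
    · exact oct_comb a b c d x (2*α+2*β-1) (2*γ) (1-2*β-2*γ) 0 (1-2*α) 0
        (by linarith) (by linarith) (by linarith) le_rfl (by linarith) le_rfl
        (by ring) (by rw [hx]; simp only [mp_eq]; match_scalars <;> linarith)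
    · exact oct_comb a b c d x (2*α+2*β-1) (1-2*β) 0 (2*β+2*γ-1) (2*δ) 0
        (by linarith) (by linarith) le_rfl (by linarith) (by linarith) le_rfl
        (by linarith) (by rw [hx]; simp only [mp_eq]; match_scalars <;> linarith)
  · rcases le_total (α + δ) (1/2 : ℝ) with had | had
    · exact oct_comb a b c d x 0 (2*α) 0 (1-2*δ-2*α) (1-2*γ) (2*γ+2*δ-1)
        le_rfl (by linarith) le_rfl (by linarith) (by linarith) (by linarith)
        (by linarith) (by rw [hx]; simp only [mp_eq]; match_scalars <;> linarith)
    · exact oct_comb a b c d x 0 (1-2*δ) (2*α+2*δ-1) 0 (2*β) (2*γ+2*δ-1)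
        le_rfl (by linarith) (by linarith) le_rfl (by linarith) (by linarith)
        (by linarith) (by rw [hx]; simp only [mp_eq]; match_scalars <;> linarith)


set_option maxHeartbeats 2000000 in
/-- The interior octahedron of regular (red) refinement of a
nondegenerate tetrahedron `τ = conv{a,b,c,d}` in `ℝ³`, namely the convex hull
of the six edge midpoints, has volume `vol(Ω) = vol(τ)/2`. -/
theorem octahedron_volume_half
    (a b c d : EuclideanSpace ℝ (Fin 3))
    (h : AffineIndependent ℝ ![a, b, c, d]) :
    volume (convexHull ℝ
        {midpoint ℝ a b, midpoint ℝ a c, midpoint ℝ a d,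
         midpoint ℝ b c, midpoint ℝ b d, midpoint ℝ c d}) =
      volume (convexHull ℝ {a, b, c, d}) / 2 := by
  classical
  -- the affine basis
  have htop : affineSpan ℝ (Set.range ![a, b, c, d]) = ⊤ := by
    rw [h.affineSpan_eq_top_iff_card_eq_finrank_add_one]
    simp [finrank_euclideanSpace_fin]
  set B : AffineBasis (Fin 4) ℝ (EuclideanSpace ℝ (Fin 3)) := ⟨![a, b, c, d], h, htop⟩ with hB
  have hc : ∀ i j : Fin 4, B.coord i (![a, b, c, d] j) = if i = j then 1 else 0 :=
    fun i j => B.coord_apply i j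
  have h00 : B.coord 0 a = 1 := by simpa using hc 0 0
  have h01 : B.coord 0 b = 0 := by simpa using hc 0 1
  have h02 : B.coord 0 c = 0 := by simpa using hc 0 2
  have h03 : B.coord 0 d = 0 := by simpa using hc 0 3
  have h10 : B.coord 1 a = 0 := by simpa using hc 1 0
  have h11 : B.coord 1 b = 1 := by simpa using hc 1 1
  have h12 : B.coord 1 c = 0 := by simpa using hc 1 2
  have h13 : B.coord 1 d = 0 := by simpa using hc 1 3
  have h20 : B.coord 2 a = 0 := by simpa using hc 2 0
  have h21 : B.coord 2 b = 0 := by simpa using hc 2 1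
  have h22 : B.coord 2 c = 1 := by simpa using hc 2 2
  have h23 : B.coord 2 d = 0 := by simpa using hc 2 3
  have h30 : B.coord 3 a = 0 := by simpa using hc 3 0
  have h31 : B.coord 3 b = 0 := by simpa using hc 3 1
  have h32 : B.coord 3 c = 0 := by simpa using hc 3 2
  have h33 : B.coord 3 d = 1 := by simpa using hc 3 3
  have hmid : ∀ (i : Fin 4) (u v : EuclideanSpace ℝ (Fin 3)),
      B.coord i (midpoint ℝ u v) = (B.coord i u + B.coord i v) / 2 := by
    intro i u v
    rw [(B.coord i).map_midpoint, midpoint_eq_smul_add, invOf_eq_inv, smul_eq_mul]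
    ring
  -- the five pieces
  set T := convexHull ℝ ({a, b, c, d} : Set (EuclideanSpace ℝ (Fin 3))) with hT
  set Om := convexHull ℝ ({midpoint ℝ a b, midpoint ℝ a c, midpoint ℝ a d,
      midpoint ℝ b c, midpoint ℝ b d, midpoint ℝ c d} : Set (EuclideanSpace ℝ (Fin 3))) with hOm
  set Ka := convexHull ℝ ({a, midpoint ℝ a b, midpoint ℝ a c, midpoint ℝ a d} :
      Set (EuclideanSpace ℝ (Fin 3))) with hKa
  set Kb := convexHull ℝ ({b, midpoint ℝ b a, midpoint ℝ b c, midpoint ℝ b d} :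
      Set (EuclideanSpace ℝ (Fin 3))) with hKb
  set Kc := convexHull ℝ ({c, midpoint ℝ c a, midpoint ℝ c b, midpoint ℝ c d} :
      Set (EuclideanSpace ℝ (Fin 3))) with hKc
  set Kd := convexHull ℝ ({d, midpoint ℝ d a, midpoint ℝ d b, midpoint ℝ d c} :
      Set (EuclideanSpace ℝ (Fin 3))) with hKd
  -- homothety facts
  have hom_mid : ∀ u v : EuclideanSpace ℝ (Fin 3),
      AffineMap.homothety u (2⁻¹:ℝ) v = midpoint ℝ u v := by
    intro u v
    rw [AffineMap.homothety_apply, midpoint_eq_smul_add, invOf_eq_inv]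
    show (2⁻¹:ℝ) • (v - u) + u = (2⁻¹:ℝ) • (u + v)
    module
  have hvol_hom : ∀ (p : EuclideanSpace ℝ (Fin 3)) (s : Set (EuclideanSpace ℝ (Fin 3))),
      volume (AffineMap.homothety p (2⁻¹:ℝ) '' s) = 8⁻¹ * volume s := by
    intro p s
    rw [Measure.addHaar_image_homothety, finrank_euclideanSpace_fin]
    congr 1
    rw [show |(2⁻¹:ℝ) ^ 3| = ((8:ℝ)⁻¹) by norm_num,
      ENNReal.ofReal_inv_of_pos (by norm_num), ENNReal.ofReal_ofNat]
  have hKa_img : AffineMap.homothety a (2⁻¹:ℝ) '' T = Ka := by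
    rw [hT, hKa, AffineMap.image_convexHull]
    congr 1
    ext y
    simp [Set.image_insert_eq, hom_mid, midpoint_self]
    try tauto
  have hKb_img : AffineMap.homothety b (2⁻¹:ℝ) '' T = Kb := by
    rw [hT, hKb, AffineMap.image_convexHull]
    congr 1
    ext y
    simp [Set.image_insert_eq, hom_mid, midpoint_self, midpoint_comm b a]
    try tauto
  have hKc_img : AffineMap.homothety c (2⁻¹:ℝ) '' T = Kc := by
    rw [hT, hKc, AffineMap.image_convexHull]
    congr 1
    ext y
    simp [Set.image_insert_eq, hom_mid, midpoint_self, midpoint_comm c a, midpoint_comm c b]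
    try tauto
  have hKd_img : AffineMap.homothety d (2⁻¹:ℝ) '' T = Kd := by
    rw [hT, hKd, AffineMap.image_convexHull]
    congr 1
    ext y
    simp [Set.image_insert_eq, hom_mid, midpoint_self, midpoint_comm d a, midpoint_comm d b,
      midpoint_comm d c]
    try tauto
  have hvKa : volume Ka = 8⁻¹ * volume T := by rw [← hKa_img, hvol_hom]
  have hvKb : volume Kb = 8⁻¹ * volume T := by rw [← hKb_img, hvol_hom]
  have hvKc : volume Kc = 8⁻¹ * volume T := by rw [← hKc_img, hvol_hom]
  have hvKd : volume Kd = 8⁻¹ * volume T := by rw [← hKd_img, hvol_hom]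
  -- hyperplanes are null
  have hplane : ∀ i : Fin 4,
      volume {x : EuclideanSpace ℝ (Fin 3) | B.coord i x = 1/2} = 0 := by
    intro i
    set S : AffineSubspace ℝ (EuclideanSpace ℝ (Fin 3)) :=
      AffineSubspace.comap (B.coord i) (AffineSubspace.mk' (1/2:ℝ) ⊥) with hS
    have hmem : ∀ x, x ∈ S ↔ B.coord i x = 1/2 := by
      intro x
      rw [hS, AffineSubspace.mem_comap, AffineSubspace.mem_mk']
      simp [sub_eq_zero]
    have hii : B.coord i (B i) = 1 := by rw [B.coord_apply]; simp
    have hne : S ≠ ⊤ := by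
      intro hSt
      have hm : B i ∈ S := hSt ▸ AffineSubspace.mem_top ℝ _ _
      rw [hmem, hii] at hm
      norm_num at hm
    have hset : {x : EuclideanSpace ℝ (Fin 3) | B.coord i x = 1/2} = (S : Set _) := by
      ext x; simp [hmem]
    rw [hset]
    exact Measure.addHaar_affineSubspace volume S hne
  -- halfspaces are convex
  have hconvle : ∀ i : Fin 4,
      Convex ℝ {x : EuclideanSpace ℝ (Fin 3) | B.coord i x ≤ 1/2} :=
    fun i => (convex_Iic (1/2:ℝ)).affine_preimage (B.coord i)
  have hconvge : ∀ i : Fin 4,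
      Convex ℝ {x : EuclideanSpace ℝ (Fin 3) | 1/2 ≤ B.coord i x} :=
    fun i => (convex_Ici (1/2:ℝ)).affine_preimage (B.coord i)
  -- halfspace containments
  have sKa0 : Ka ⊆ {x | 1/2 ≤ B.coord 0 x} := by
    rw [hKa]
    refine convexHull_min ?_ (hconvge 0)
    rintro x (rfl | rfl | rfl | rfl) <;>
      simp [hmid, h00, h01, h02, h03] <;> norm_num
  have sKb1 : Kb ⊆ {x | 1/2 ≤ B.coord 1 x} := by
    rw [hKb]
    refine convexHull_min ?_ (hconvge 1)
    rintro x (rfl | rfl | rfl | rfl) <;>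
      simp [hmid, h10, h11, h12, h13] <;> norm_num
  have sKc2 : Kc ⊆ {x | 1/2 ≤ B.coord 2 x} := by
    rw [hKc]
    refine convexHull_min ?_ (hconvge 2)
    rintro x (rfl | rfl | rfl | rfl) <;>
      simp [hmid, h20, h21, h22, h23] <;> norm_num
  have sKd3 : Kd ⊆ {x | 1/2 ≤ B.coord 3 x} := by
    rw [hKd]
    refine convexHull_min ?_ (hconvge 3)
    rintro x (rfl | rfl | rfl | rfl) <;>
      simp [hmid, h30, h31, h32, h33] <;> norm_num
  have sKb0 : Kb ⊆ {x | B.coord 0 x ≤ 1/2} := by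
    rw [hKb]
    refine convexHull_min ?_ (hconvle 0)
    rintro x (rfl | rfl | rfl | rfl) <;>
      simp [hmid, h00, h01, h02, h03] <;> norm_num
  have sKc0 : Kc ⊆ {x | B.coord 0 x ≤ 1/2} := by
    rw [hKc]
    refine convexHull_min ?_ (hconvle 0)
    rintro x (rfl | rfl | rfl | rfl) <;>
      simp [hmid, h00, h01, h02, h03] <;> norm_num
  have sKd0 : Kd ⊆ {x | B.coord 0 x ≤ 1/2} := by
    rw [hKd]
    refine convexHull_min ?_ (hconvle 0)
    rintro x (rfl | rfl | rfl | rfl) <;>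
      simp [hmid, h00, h01, h02, h03] <;> norm_num
  have sKc1 : Kc ⊆ {x | B.coord 1 x ≤ 1/2} := by
    rw [hKc]
    refine convexHull_min ?_ (hconvle 1)
    rintro x (rfl | rfl | rfl | rfl) <;>
      simp [hmid, h10, h11, h12, h13] <;> norm_num
  have sKd1 : Kd ⊆ {x | B.coord 1 x ≤ 1/2} := by
    rw [hKd]
    refine convexHull_min ?_ (hconvle 1)
    rintro x (rfl | rfl | rfl | rfl) <;>
      simp [hmid, h10, h11, h12, h13] <;> norm_num
  have sKd2 : Kd ⊆ {x | B.coord 2 x ≤ 1/2} := by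
    rw [hKd]
    refine convexHull_min ?_ (hconvle 2)
    rintro x (rfl | rfl | rfl | rfl) <;>
      simp [hmid, h20, h21, h22, h23] <;> norm_num
  have sOm0 : Om ⊆ {x | B.coord 0 x ≤ 1/2} := by
    rw [hOm]
    refine convexHull_min ?_ (hconvle 0)
    rintro x (rfl | rfl | rfl | rfl | rfl | rfl) <;>
      simp [hmid, h00, h01, h02, h03] <;> norm_num
  have sOm1 : Om ⊆ {x | B.coord 1 x ≤ 1/2} := by
    rw [hOm]
    refine convexHull_min ?_ (hconvle 1)
    rintro x (rfl | rfl | rfl | rfl | rfl | rfl) <;>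
      simp [hmid, h10, h11, h12, h13] <;> norm_num
  have sOm2 : Om ⊆ {x | B.coord 2 x ≤ 1/2} := by
    rw [hOm]
    refine convexHull_min ?_ (hconvle 2)
    rintro x (rfl | rfl | rfl | rfl | rfl | rfl) <;>
      simp [hmid, h20, h21, h22, h23] <;> norm_num
  have sOm3 : Om ⊆ {x | B.coord 3 x ≤ 1/2} := by
    rw [hOm]
    refine convexHull_min ?_ (hconvle 3)
    rintro x (rfl | rfl | rfl | rfl | rfl | rfl) <;>
      simp [hmid, h30, h31, h32, h33] <;> norm_num
  -- pairwise a.e. disjointness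
  have dOmKa : AEDisjoint volume Om Ka := by
    show volume (Om ∩ Ka) = 0
    refine measure_mono_null ?_ (hplane 0)
    rintro x ⟨h1, h2⟩
    exact le_antisymm (sOm0 h1) (sKa0 h2)
  have dOmKb : AEDisjoint volume Om Kb := by
    show volume (Om ∩ Kb) = 0
    refine measure_mono_null ?_ (hplane 1)
    rintro x ⟨h1, h2⟩
    exact le_antisymm (sOm1 h1) (sKb1 h2)
  have dOmKc : AEDisjoint volume Om Kc := by
    show volume (Om ∩ Kc) = 0
    refine measure_mono_null ?_ (hplane 2)
    rintro x ⟨h1, h2⟩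
    exact le_antisymm (sOm2 h1) (sKc2 h2)
  have dOmKd : AEDisjoint volume Om Kd := by
    show volume (Om ∩ Kd) = 0
    refine measure_mono_null ?_ (hplane 3)
    rintro x ⟨h1, h2⟩
    exact le_antisymm (sOm3 h1) (sKd3 h2)
  have dKaKb : AEDisjoint volume Ka Kb := by
    show volume (Ka ∩ Kb) = 0
    refine measure_mono_null ?_ (hplane 0)
    rintro x ⟨h1, h2⟩
    exact le_antisymm (sKb0 h2) (sKa0 h1)
  have dKaKc : AEDisjoint volume Ka Kc := by
    show volume (Ka ∩ Kc) = 0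
    refine measure_mono_null ?_ (hplane 0)
    rintro x ⟨h1, h2⟩
    exact le_antisymm (sKc0 h2) (sKa0 h1)
  have dKaKd : AEDisjoint volume Ka Kd := by
    show volume (Ka ∩ Kd) = 0
    refine measure_mono_null ?_ (hplane 0)
    rintro x ⟨h1, h2⟩
    exact le_antisymm (sKd0 h2) (sKa0 h1)
  have dKbKc : AEDisjoint volume Kb Kc := by
    show volume (Kb ∩ Kc) = 0
    refine measure_mono_null ?_ (hplane 1)
    rintro x ⟨h1, h2⟩
    exact le_antisymm (sKc1 h2) (sKb1 h1)
  have dKbKd : AEDisjoint volume Kb Kd := by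
    show volume (Kb ∩ Kd) = 0
    refine measure_mono_null ?_ (hplane 1)
    rintro x ⟨h1, h2⟩
    exact le_antisymm (sKd1 h2) (sKb1 h1)
  have dKcKd : AEDisjoint volume Kc Kd := by
    show volume (Kc ∩ Kd) = 0
    refine measure_mono_null ?_ (hplane 2)
    rintro x ⟨h1, h2⟩
    exact le_antisymm (sKd2 h2) (sKc2 h1)
  -- characterization of T by coordinates
  have hrange : Set.range ⇑B = {a, b, c, d} := by
    ext y
    constructor
    · rintro ⟨i, rfl⟩
      fin_cases i
      exacts [Or.inl rfl, Or.inr (Or.inl rfl), Or.inr (Or.inr (Or.inl rfl)),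
        Or.inr (Or.inr (Or.inr rfl))]
    · rintro (rfl | rfl | rfl | rfl)
      exacts [⟨0, rfl⟩, ⟨1, rfl⟩, ⟨2, rfl⟩, ⟨3, rfl⟩]
  have hchar : T = {x | ∀ i, 0 ≤ B.coord i x} := by
    rw [hT, ← hrange, B.convexHull_eq_nonneg_coord]
  have hrep : ∀ x : EuclideanSpace ℝ (Fin 3),
      x = B.coord 0 x • a + B.coord 1 x • b + B.coord 2 x • c + B.coord 3 x • d := by
    intro x
    have h4 := B.linear_combination_coord_eq_self x
    rw [Fin.sum_univ_four] at h4
    exact h4.symm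
  have hsum1 : ∀ x : EuclideanSpace ℝ (Fin 3),
      B.coord 0 x + B.coord 1 x + B.coord 2 x + B.coord 3 x = 1 := by
    intro x
    have h4 := B.sum_coord_apply_eq_one x
    rwa [Fin.sum_univ_four] at h4
  -- vertices and midpoints lie in T
  have hTconv : Convex ℝ T := hT ▸ convex_convexHull ℝ _
  have haT : a ∈ T := hT ▸ subset_convexHull ℝ _ (by simp)
  have hbT : b ∈ T := hT ▸ subset_convexHull ℝ _ (by simp)
  have hcT : c ∈ T := hT ▸ subset_convexHull ℝ _ (by simp)
  have hdT : d ∈ T := hT ▸ subset_convexHull ℝ _ (by simp)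
  have hmT : ∀ u v : EuclideanSpace ℝ (Fin 3), u ∈ T → v ∈ T → midpoint ℝ u v ∈ T :=
    fun u v hu hv => hTconv.segment_subset hu hv (midpoint_mem_segment u v)
  -- the decomposition
  have hdecomp : T = Om ∪ Ka ∪ Kb ∪ Kc ∪ Kd := by
    apply Set.Subset.antisymm
    · intro x hx
      have hge : ∀ i, 0 ≤ B.coord i x := by rw [hchar] at hx; exact hx
      rcases le_or_gt (1/2) (B.coord 0 x) with h0 | h0
      · refine Or.inl (Or.inl (Or.inl (Or.inr ?_)))
        rw [hKa]
        exact corner_mem a b c d x _ _ _ _ h0 (hge 1) (hge 2) (hge 3) (hsum1 x) (hrep x)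
      rcases le_or_gt (1/2) (B.coord 1 x) with h1 | h1
      · refine Or.inl (Or.inl (Or.inr ?_))
        rw [hKb]
        exact corner_mem b a c d x _ _ _ _ h1 (hge 0) (hge 2) (hge 3)
          (by have := hsum1 x; linarith) ((hrep x).trans (by module))
      rcases le_or_gt (1/2) (B.coord 2 x) with h2 | h2
      · refine Or.inl (Or.inr ?_)
        rw [hKc]
        exact corner_mem c a b d x _ _ _ _ h2 (hge 0) (hge 1) (hge 3)
          (by have := hsum1 x; linarith) ((hrep x).trans (by module))
      rcases le_or_gt (1/2) (B.coord 3 x) with h3 | h3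
      · refine Or.inr ?_
        rw [hKd]
        exact corner_mem d a b c x _ _ _ _ h3 (hge 0) (hge 1) (hge 2)
          (by have := hsum1 x; linarith) ((hrep x).trans (by module))
      refine Or.inl (Or.inl (Or.inl (Or.inl ?_)))
      rw [hOm]
      exact oct_mem a b c d x _ _ _ _ (hge 0) (hge 1) (hge 2) (hge 3)
        h0.le h1.le h2.le h3.le (hsum1 x) (hrep x)
    · refine Set.union_subset (Set.union_subset (Set.union_subset
        (Set.union_subset ?_ ?_) ?_) ?_) ?_
      · rw [hOm]
        refine convexHull_min ?_ hTconv
        rintro x (rfl | rfl | rfl | rfl | rfl | rfl)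
        exacts [hmT _ _ haT hbT, hmT _ _ haT hcT, hmT _ _ haT hdT,
          hmT _ _ hbT hcT, hmT _ _ hbT hdT, hmT _ _ hcT hdT]
      · rw [hKa]
        refine convexHull_min ?_ hTconv
        rintro x (rfl | rfl | rfl | rfl)
        exacts [haT, hmT _ _ haT hbT, hmT _ _ haT hcT, hmT _ _ haT hdT]
      · rw [hKb]
        refine convexHull_min ?_ hTconv
        rintro x (rfl | rfl | rfl | rfl)
        exacts [hbT, hmT _ _ hbT haT, hmT _ _ hbT hcT, hmT _ _ hbT hdT]
      · rw [hKc]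
        refine convexHull_min ?_ hTconv
        rintro x (rfl | rfl | rfl | rfl)
        exacts [hcT, hmT _ _ hcT haT, hmT _ _ hcT hbT, hmT _ _ hcT hdT]
      · rw [hKd]
        refine convexHull_min ?_ hTconv
        rintro x (rfl | rfl | rfl | rfl)
        exacts [hdT, hmT _ _ hdT haT, hmT _ _ hdT hbT, hmT _ _ hdT hcT]
  -- measurability
  have nmOm : NullMeasurableSet Om volume := by
    rw [hOm]
    exact ((Set.toFinite _).isCompact_convexHull ℝ).isClosed.measurableSet.nullMeasurableSet
  have nmKa : NullMeasurableSet Ka volume := by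
    rw [hKa]
    exact ((Set.toFinite _).isCompact_convexHull ℝ).isClosed.measurableSet.nullMeasurableSet
  have nmKb : NullMeasurableSet Kb volume := by
    rw [hKb]
    exact ((Set.toFinite _).isCompact_convexHull ℝ).isClosed.measurableSet.nullMeasurableSet
  have nmKc : NullMeasurableSet Kc volume := by
    rw [hKc]
    exact ((Set.toFinite _).isCompact_convexHull ℝ).isClosed.measurableSet.nullMeasurableSet
  have nmKd : NullMeasurableSet Kd volume := by
    rw [hKd]
    exact ((Set.toFinite _).isCompact_convexHull ℝ).isClosed.measurableSet.nullMeasurableSet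
  have hfin : volume T ≠ ⊤ := by
    rw [hT]
    exact (((Set.toFinite _).isCompact_convexHull ℝ).measure_lt_top).ne
  -- additivity
  have hU : volume T = volume Om + volume Ka + volume Kb + volume Kc + volume Kd := by
    rw [hdecomp,
      measure_union₀ nmKd (((dOmKd.union_left dKaKd).union_left dKbKd).union_left dKcKd),
      measure_union₀ nmKc ((dOmKc.union_left dKaKc).union_left dKbKc),
      measure_union₀ nmKb (dOmKb.union_left dKaKb),
      measure_union₀ nmKa dOmKa]
  rw [hvKa, hvKb, hvKc, hvKd] at hU
  have h8 : (8⁻¹:ℝ≥0∞) * volume T + 8⁻¹ * volume T + 8⁻¹ * volume T + 8⁻¹ * volume T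
      = volume T / 2 := by
    rw [show (8⁻¹:ℝ≥0∞) * volume T = volume T / 8 from
      (ENNReal.div_eq_inv_mul (a := volume T) (b := 8)).symm,
      ENNReal.div_add_div_same, ENNReal.div_add_div_same, ENNReal.div_add_div_same,
      show volume T + volume T + volume T + volume T = 4 * volume T by ring,
      show (8:ℝ≥0∞) = 4*2 by norm_num,
      ENNReal.mul_div_mul_left (volume T) 2 (by norm_num) (by norm_num)]
  have hU2 : volume T = volume Om + volume T / 2 := by
    rw [show volume Om + 8⁻¹ * volume T + 8⁻¹ * volume T + 8⁻¹ * volume T + 8⁻¹ * volume T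
        = volume Om + (8⁻¹ * volume T + 8⁻¹ * volume T + 8⁻¹ * volume T + 8⁻¹ * volume T)
      by ring, h8] at hU
    exact hU
  have h2 : volume T / 2 + volume T / 2 = volume T := ENNReal.add_halves _
  have hh : volume T / 2 ≠ ⊤ := (ENNReal.div_lt_top hfin (by norm_num)).ne
  exact WithTop.add_right_cancel hh (hU2.symm.trans h2.symm)
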